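/- Fix m ≥ 1, α ∈ [0,1], and fixed (non-random) values p_1,...,p_{m−1} ∈ [0,1]. Let p_m ~ Uniform{1/L, 2/L, ..., (L−1)/L, 1}, let R_α := argmax_{k ∈ {0,...,m}} (αk/m − p_(k)) computed from all m values (p_(0) := 0), and let rank(p_m) := #{i : p_i ≤ p_m}, with ties among equal values broken uniformly at random. Then there exist a constant C and a threshold L_0 (depending on m, α, and the values p_1,...,p_{m−1}) such that for all L ≥ L_0, P(rank(p_m) = R_α) ≤ α/m + C·m/L; i.e., P(rank(p_m) = R_α) ≤ α/m + O(m/L) as L → ∞. -/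

import Mathlib

open MeasureTheory Filter Set

/-- The `k`-th order statistic of the values `v 0, ..., v (m-1)`. -/
noncomputable def orderStat {m : ℕ} (v : Fin m → ℝ) (k : ℕ) : ℝ :=
  if k = 0 then 0
  else sInf {x : ℝ | k ≤ (Finset.univ.filter (fun i => v i ≤ x)).card}

/-- The support-line objective `k ↦ α k / m − p_(k)`. -/
noncomputable def slObj (α : ℝ) {m : ℕ} (v : Fin m → ℝ) (k : ℕ) : ℝ :=
  α * (k : ℝ) / (m : ℝ) - orderStat v k

/-- The number of rejections `R_α` of the support-line procedure at level `α`. -/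
noncomputable def slR (α : ℝ) {m : ℕ} (v : Fin m → ℝ) : ℕ :=
  sSup {k : ℕ | k ≤ m ∧ ∀ j ≤ m, slObj α v j ≤ slObj α v k}

/-- The rejection threshold `τ̂_α = p_(R_α)` of the support-line procedure. -/
noncomputable def slTau (α : ℝ) {m : ℕ} (v : Fin m → ℝ) : ℝ :=
  orderStat v (slR α v)

/-- Fix `m`, `α`, and non-random values `p_1, ..., p_{m−1} ∈ [0,1]`.
With `p_m` uniform on the grid `{1/L, ..., L/L}` and ties among equal p-values broken
uniformly at random, the probability that `p_m` is the boundary rejection of the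
support-line procedure, namely
`(1/L) ∑_{ℓ=1}^L 1{τ̂_α = ℓ/L, R_α ≥ 1} / #{i : p_i = ℓ/L}` (the count including
`p_m = ℓ/L` itself), is at most `α/m + C·m/L` for all large `L`. -/

lemma orderStat_isLeast {m : ℕ} (v : Fin m → ℝ) (k : ℕ) (h1 : 1 ≤ k) (h2 : k ≤ m) :
    IsLeast {x : ℝ | k ≤ (Finset.univ.filter (fun i => v i ≤ x)).card} (orderStat v k) := by
  classical
  have hm : 0 < m := lt_of_lt_of_le h1 h2
  have hAne : (Finset.univ.image v).Nonempty :=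
    ⟨v ⟨0, hm⟩, Finset.mem_image_of_mem v (Finset.mem_univ _)⟩
  set A := Finset.univ.image v with hAdef
  set B := A.filter (fun y => k ≤ (Finset.univ.filter (fun i => v i ≤ y)).card) with hBdef
  have hBne : B.Nonempty := by
    refine ⟨A.max' hAne, Finset.mem_filter.2 ⟨A.max'_mem hAne, ?_⟩⟩
    have huniv : Finset.univ.filter (fun i => v i ≤ A.max' hAne) = Finset.univ := by
      ext i
      simp only [Finset.mem_filter, Finset.mem_univ, true_and, iff_true]
      exact Finset.le_max' A (v i) (Finset.mem_image_of_mem v (Finset.mem_univ i))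
    rw [huniv, Finset.card_univ, Fintype.card_fin]
    exact h2
  set c := B.min' hBne with hcdef
  have hcS : k ≤ (Finset.univ.filter (fun i => v i ≤ c)).card :=
    (Finset.mem_filter.1 (B.min'_mem hBne)).2
  have hlb : ∀ x ∈ {x : ℝ | k ≤ (Finset.univ.filter (fun i => v i ≤ x)).card}, c ≤ x := by
    intro x hx
    simp only [Set.mem_setOf_eq] at hx
    have hDne : (A.filter (fun y => y ≤ x)).Nonempty := by
      have hpos : 0 < (Finset.univ.filter (fun i => v i ≤ x)).card := lt_of_lt_of_le h1 hx
      obtain ⟨i, hi⟩ := Finset.card_pos.1 hpos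
      have := (Finset.mem_filter.1 hi).2
      exact ⟨v i, Finset.mem_filter.2 ⟨Finset.mem_image_of_mem v (Finset.mem_univ i), this⟩⟩
    set y := (A.filter (fun y => y ≤ x)).max' hDne with hydef
    have hyA : y ∈ A ∧ y ≤ x := by
      have := (A.filter (fun y => y ≤ x)).max'_mem hDne
      exact ⟨(Finset.mem_filter.1 this).1, (Finset.mem_filter.1 this).2⟩
    have hsub : Finset.univ.filter (fun i => v i ≤ x) ⊆ Finset.univ.filter (fun i => v i ≤ y) := by
      intro i hi
      have hvi : v i ≤ x := (Finset.mem_filter.1 hi).2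
      refine Finset.mem_filter.2 ⟨Finset.mem_univ _, ?_⟩
      rw [hydef]
      exact Finset.le_max' (A.filter (fun y => y ≤ x)) (v i)
        (Finset.mem_filter.2 ⟨Finset.mem_image_of_mem v (Finset.mem_univ i), hvi⟩)
    have hyB : y ∈ B := Finset.mem_filter.2 ⟨hyA.1, le_trans hx (Finset.card_le_card hsub)⟩
    exact le_trans (Finset.min'_le B y hyB) hyA.2
  have : orderStat v k = c := by
    rw [orderStat, if_neg (by omega)]
    exact IsLeast.csInf_eq ⟨hcS, hlb⟩
  rw [this]
  exact ⟨hcS, hlb⟩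

lemma slR_mem (α : ℝ) {m : ℕ} (hm : 1 ≤ m) (v : Fin m → ℝ) :
    slR α v ≤ m ∧ ∀ j ≤ m, slObj α v j ≤ slObj α v (slR α v) := by
  classical
  have hne : {k : ℕ | k ≤ m ∧ ∀ j ≤ m, slObj α v j ≤ slObj α v k}.Nonempty := by
    obtain ⟨k, hk, hmax⟩ := Finset.exists_max_image (Finset.range (m+1)) (slObj α v) ⟨0, by simp⟩
    refine ⟨k, by simpa [Nat.lt_succ_iff] using hk, fun j hj => hmax j ?_⟩
    simp [Nat.lt_succ_iff, hj]
  have hbdd : BddAbove {k : ℕ | k ≤ m ∧ ∀ j ≤ m, slObj α v j ≤ slObj α v k} :=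
    ⟨m, fun k hk => hk.1⟩
  exact Nat.sSup_mem hne hbdd

lemma card_not_lt (m : ℕ) (hm : 1 ≤ m) :
    Finset.univ.filter (fun i : Fin m => ¬ ((i:ℕ) < m - 1)) = {⟨m-1, by omega⟩} := by
  ext i
  simp only [Finset.mem_filter, Finset.mem_univ, true_and, Finset.mem_singleton]
  constructor
  · intro h
    have := i.isLt
    exact Fin.ext (show i.val = m - 1 by omega)
  · intro h
    subst h
    exact lt_irrefl _

lemma count_split {m : ℕ} (hm : 1 ≤ m) (pfix : ℕ → ℝ) (t x : ℝ) :
    (Finset.univ.filter (fun i : Fin m => (if (i:ℕ) < m - 1 then pfix i else t) ≤ x)).card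
    = (Finset.univ.filter (fun i : Fin m => (i:ℕ) < m - 1 ∧ pfix i ≤ x)).card
      + (if t ≤ x then 1 else 0) := by
  classical
  have h1 : (Finset.univ.filter (fun i : Fin m => (i:ℕ) < m - 1 ∧ pfix i ≤ x))
      = (Finset.univ.filter (fun i : Fin m => (i:ℕ) < m - 1)).filter (fun i : Fin m => pfix (i:ℕ) ≤ x) := by
    rw [Finset.filter_filter]
  rw [h1, Finset.card_filter, Finset.card_filter]
  rw [← Finset.sum_filter_add_sum_filter_not Finset.univ (fun i : Fin m => (i:ℕ) < m - 1)
      (fun i => if (if (i:ℕ) < m - 1 then pfix i else t) ≤ x then 1 else 0)]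
  congr 1
  · exact Finset.sum_congr rfl (fun i hi => by simp [(Finset.mem_filter.1 hi).2])
  · rw [card_not_lt m hm, Finset.sum_singleton]
    have : ¬ ((m - 1 : ℕ) < m - 1) := lt_irrefl _
    simp only [this, if_false]

lemma pair_key (m : ℕ) (hm : 1 ≤ m) (α : ℝ) (pfix : ℕ → ℝ) (t t' : ℝ)
    (h0 : 0 < t) (hlt : t < t')
    (hR : 1 ≤ slR α (fun i : Fin m => if (i:ℕ) < m - 1 then pfix i else t))
    (hR' : 1 ≤ slR α (fun i : Fin m => if (i:ℕ) < m - 1 then pfix i else t'))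
    (hT : slTau α (fun i : Fin m => if (i:ℕ) < m - 1 then pfix i else t) = t)
    (hT' : slTau α (fun i : Fin m => if (i:ℕ) < m - 1 then pfix i else t') = t') :
    slR α (fun i : Fin m => if (i:ℕ) < m - 1 then pfix i else t)
      ≤ slR α (fun i : Fin m => if (i:ℕ) < m - 1 then pfix i else t')
    ∧ α * ((slR α (fun i : Fin m => if (i:ℕ) < m - 1 then pfix i else t') : ℝ)
        - (slR α (fun i : Fin m => if (i:ℕ) < m - 1 then pfix i else t) : ℝ)) / m ≤ t' - t
    ∧ t' - t ≤ α * ((slR α (fun i : Fin m => if (i:ℕ) < m - 1 then pfix i else t') : ℝ)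
        - (slR α (fun i : Fin m => if (i:ℕ) < m - 1 then pfix i else t) : ℝ) + 1) / m := by
  classical
  set v : Fin m → ℝ := fun i : Fin m => if (i:ℕ) < m - 1 then pfix i else t with hv
  set v' : Fin m → ℝ := fun i : Fin m => if (i:ℕ) < m - 1 then pfix i else t' with hv'
  set k := slR α v with hk
  set k' := slR α v' with hk'
  have hkm : k ≤ m := (slR_mem α hm v).1
  have hk'm : k' ≤ m := (slR_mem α hm v').1
  have hmax : ∀ j ≤ m, slObj α v j ≤ slObj α v k := (slR_mem α hm v).2
  have hmax' : ∀ j ≤ m, slObj α v' j ≤ slObj α v' k' := (slR_mem α hm v').2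
  have hOk : orderStat v k = t := hT
  have hOk' : orderStat v' k' = t' := hT'
  have hLst := orderStat_isLeast v k hR hkm
  have hLst' := orderStat_isLeast v' k' hR' hk'm
  rw [hOk] at hLst
  rw [hOk'] at hLst'
  -- Q x notation
  have hcv : ∀ x, (Finset.univ.filter (fun i => v i ≤ x)).card
      = (Finset.univ.filter (fun i : Fin m => (i:ℕ) < m - 1 ∧ pfix i ≤ x)).card
        + (if t ≤ x then 1 else 0) := fun x => count_split hm pfix t x
  have hcv' : ∀ x, (Finset.univ.filter (fun i => v' i ≤ x)).card
      = (Finset.univ.filter (fun i : Fin m => (i:ℕ) < m - 1 ∧ pfix i ≤ x)).card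
        + (if t' ≤ x then 1 else 0) := fun x => count_split hm pfix t' x
  set Q : ℝ → ℕ := fun x =>
    (Finset.univ.filter (fun i : Fin m => (i:ℕ) < m - 1 ∧ pfix i ≤ x)).card with hQ
  -- k ≤ Q t + 1
  have hQt : k ≤ Q t + 1 := by
    have := hLst.1
    simp only [Set.mem_setOf_eq] at this
    rw [hcv t, if_pos le_rfl] at this
    exact this
  -- Q t < k'  (A)
  have hQtk' : Q t + 1 ≤ k' := by
    by_contra hcon
    push_neg at hcon
    have htS : t ∈ {x : ℝ | k' ≤ (Finset.univ.filter (fun i => v' i ≤ x)).card} := by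
      simp only [Set.mem_setOf_eq]
      rw [hcv' t, if_neg (not_le.2 hlt)]
      simp only [hQ] at hcon
      omega
    exact absurd (hLst'.2 htS) (not_le.2 hlt)
  have hkk' : k ≤ k' := le_trans hQt hQtk'
  -- (B)
  have hcvt' : k' ≤ (Finset.univ.filter (fun i => v i ≤ t')).card := by
    have h1 := hLst'.1
    simp only [Set.mem_setOf_eq] at h1
    rw [hcv' t', if_pos le_rfl] at h1
    rw [hcv t', if_pos (le_of_lt hlt)]
    exact h1
  have hOle : orderStat v k' ≤ t' := (orderStat_isLeast v k' (le_trans hR hkk') hk'm).2 hcvt'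
  have hB : α * ((k' : ℝ) - (k : ℝ)) / m ≤ t' - t := by
    have h2 := hmax k' hk'm
    rw [slObj, slObj, hOk] at h2
    have : α * (k' : ℝ) / m - α * (k : ℝ) / m = α * ((k' : ℝ) - k) / m := by ring
    linarith
  -- (C)
  have hOle2 : orderStat v' (k - 1) ≤ t := by
    rcases Nat.eq_or_lt_of_le hR with h1 | h1
    · rw [← h1]
      norm_num [orderStat]
      exact le_of_lt h0
    · have hk1 : 1 ≤ k - 1 := by omega
      have hk1m : k - 1 ≤ m := by omega
      refine (orderStat_isLeast v' (k-1) hk1 hk1m).2 ?_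
      simp only [Set.mem_setOf_eq]
      rw [hcv' t, if_neg (not_le.2 hlt)]
      simp only [hQ] at hQt
      omega
  have hC : t' - t ≤ α * ((k' : ℝ) - (k : ℝ) + 1) / m := by
    have h2 := hmax' (k - 1) (by omega)
    rw [slObj, slObj, hOk'] at h2
    have hcast : ((k - 1 : ℕ) : ℝ) = (k : ℝ) - 1 := by
      have : (1:ℕ) ≤ k := hR
      push_cast [Nat.cast_sub this]
      ring
    rw [hcast] at h2
    have : α * ((k:ℝ) - 1) / m = α * (k:ℝ) / m - α / m := by ring
    have heq : α * ((k' : ℝ) - (k : ℝ) + 1) / m = α * (k':ℝ)/m - α * ((k:ℝ)-1)/m := by ring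
    linarith
  exact ⟨hkk', hB, hC⟩

lemma card_bound (m : ℕ) (hm : 1 ≤ m) (α : ℝ) (hα : α ∈ Icc (0 : ℝ) 1) (pfix : ℕ → ℝ)
    (L : ℕ) (hL : 1 ≤ L) (E : Finset ℕ) (hEsub : E ⊆ Finset.Icc 1 L)
    (hEvent : ∀ ℓ ∈ E,
      1 ≤ slR α (fun i : Fin m => if (i:ℕ) < m - 1 then pfix i else (ℓ:ℝ)/L)
      ∧ slTau α (fun i : Fin m => if (i:ℕ) < m - 1 then pfix i else (ℓ:ℝ)/L) = (ℓ:ℝ)/L) :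
    (E.card : ℝ) ≤ α * L / m + 2 * m := by
  classical
  have hm0 : (0:ℝ) < m := by exact_mod_cast hm
  have hL0 : (0:ℝ) < L := by exact_mod_cast hL
  set K : ℕ → ℕ := fun ℓ => slR α (fun i : Fin m => if (i:ℕ) < m - 1 then pfix i else (ℓ:ℝ)/L)
    with hK
  set ψ : ℕ → ℤ := fun ℓ => (ℓ:ℤ) - ⌈α * L * (K ℓ : ℝ) / m⌉ + (K ℓ : ℤ) with hψ
  -- pairwise facts
  have hpair : ∀ ℓ ∈ E, ∀ ℓ' ∈ E, ℓ < ℓ' →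
      K ℓ ≤ K ℓ' ∧ α * ((K ℓ' : ℝ) - (K ℓ : ℝ)) / m ≤ (ℓ':ℝ)/L - (ℓ:ℝ)/L
      ∧ (ℓ':ℝ)/L - (ℓ:ℝ)/L ≤ α * ((K ℓ' : ℝ) - (K ℓ : ℝ) + 1) / m := by
    intro ℓ hℓ ℓ' hℓ' hlt
    have h1 : 1 ≤ ℓ := (Finset.mem_Icc.1 (hEsub hℓ)).1
    have h0 : (0:ℝ) < (ℓ:ℝ)/L := by positivity
    have htt' : (ℓ:ℝ)/L < (ℓ':ℝ)/L := by
      apply div_lt_div_of_pos_right _ hL0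
      exact_mod_cast hlt
    exact pair_key m hm α pfix ((ℓ:ℝ)/L) ((ℓ':ℝ)/L) h0 htt'
      (hEvent ℓ hℓ).1 (hEvent ℓ' hℓ').1 (hEvent ℓ hℓ).2 (hEvent ℓ' hℓ').2
  have hmono : ∀ ℓ ∈ E, ∀ ℓ' ∈ E, ℓ < ℓ' → ψ ℓ < ψ ℓ' := by
    intro ℓ hℓ ℓ' hℓ' hlt
    obtain ⟨hkk, hB, _⟩ := hpair ℓ hℓ ℓ' hℓ' hlt
    have hceil1 : (⌈α * L * (K ℓ' : ℝ) / m⌉ : ℤ)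
        ≤ ⌈α * L * (K ℓ : ℝ) / m⌉ + ⌈α * L * ((K ℓ' : ℝ) - (K ℓ : ℝ)) / m⌉ := by
      have heq : α * L * (K ℓ' : ℝ) / m
          = α * L * (K ℓ : ℝ) / m + α * L * ((K ℓ' : ℝ) - (K ℓ : ℝ)) / m := by ring
      rw [heq]
      exact Int.ceil_add_le _ _
    have hceil2 : ⌈α * L * ((K ℓ' : ℝ) - (K ℓ : ℝ)) / m⌉ ≤ (ℓ' : ℤ) - (ℓ : ℤ) := by
      rw [Int.ceil_le]
      push_cast
      have heq : α * L * ((K ℓ' : ℝ) - (K ℓ : ℝ)) / m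
          = (α * ((K ℓ' : ℝ) - (K ℓ : ℝ)) / m) * L := by ring
      rw [heq]
      have := mul_le_mul_of_nonneg_right hB (le_of_lt hL0)
      calc (α * ((K ℓ' : ℝ) - (K ℓ : ℝ)) / m) * L
          ≤ ((ℓ':ℝ)/L - (ℓ:ℝ)/L) * L := this
        _ = (ℓ':ℝ) - (ℓ:ℝ) := by field_simp
    rcases Nat.eq_or_lt_of_le hkk with heq | hltk
    · simp only [hψ, ← heq]
      omega
    · simp only [hψ]
      have hc : (K ℓ : ℤ) < (K ℓ' : ℤ) := by exact_mod_cast hltk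
      omega
  -- case on card
  have hm1 : (1:ℝ) ≤ (m:ℝ) := by exact_mod_cast hm
  have hALm : (0:ℝ) ≤ α * L / m := by
    have := hα.1
    positivity
  rcases le_or_gt E.card 1 with hcard | hcard
  · have : (E.card : ℝ) ≤ 1 := by exact_mod_cast hcard
    linarith
  · have hne : E.Nonempty := Finset.card_pos.1 (by omega)
    set a := E.min' hne with ha
    set b := E.max' hne with hb
    have hab : a < b := Finset.min'_lt_max'_of_card E (by omega)
    have haE : a ∈ E := E.min'_mem hne
    have hbE : b ∈ E := E.max'_mem hne
    -- injection into Icc (ψ a) (ψ b)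
    have hcardle : E.card ≤ (Finset.Icc (ψ a) (ψ b)).card := by
      apply Finset.card_le_card_of_injOn ψ
      · intro ℓ hℓ
        rw [Finset.coe_Icc, Set.mem_Icc]
        constructor
        · rcases eq_or_lt_of_le (E.min'_le ℓ hℓ) with h | h
          · rw [← h]
          · exact le_of_lt (hmono a haE ℓ hℓ h)
        · rcases eq_or_lt_of_le (E.le_max' ℓ hℓ) with h | h
          · rw [h]
          · exact le_of_lt (hmono ℓ hℓ b hbE h)
      · intro x hx y hy hxy
        by_contra hne2
        rcases lt_or_gt_of_ne hne2 with h | h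
        · exact absurd hxy (ne_of_lt (hmono x hx y hy h))
        · exact absurd hxy.symm (ne_of_lt (hmono y hy x hx h))
    have hIcc : ((Finset.Icc (ψ a) (ψ b)).card : ℤ) = ψ b - ψ a + 1 := by
      rw [Int.card_Icc]
      have : ψ a ≤ ψ b := le_of_lt (hmono a haE b hbE hab)
      omega
    -- real bound on ψ b - ψ a
    obtain ⟨hkk, _, hC⟩ := hpair a haE b hbE hab
    have hka : 1 ≤ K a := (hEvent a haE).1
    have hkb : K b ≤ m := (slR_mem α hm _).1
    have hba : (b:ℝ) - a ≤ α * L * ((K b : ℝ) - (K a : ℝ) + 1) / m := by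
      have := mul_le_mul_of_nonneg_right hC (le_of_lt hL0)
      have heq : ((b:ℝ)/L - (a:ℝ)/L) * L = (b:ℝ) - a := by field_simp
      have heq2 : (α * ((K b : ℝ) - (K a : ℝ) + 1) / m) * L
          = α * L * ((K b : ℝ) - (K a : ℝ) + 1) / m := by ring
      linarith [this, heq.symm ▸ this]
    have hc1 : α * L * (K b : ℝ) / m ≤ (⌈α * L * (K b : ℝ) / m⌉ : ℝ) := Int.le_ceil _
    have hc2 : (⌈α * L * (K a : ℝ) / m⌉ : ℝ) < α * L * (K a : ℝ) / m + 1 :=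
      Int.ceil_lt_add_one _
    have hψba : ((ψ b - ψ a : ℤ) : ℝ) ≤ α * L / m + m := by
      simp only [hψ]
      push_cast
      have hΔ : (K b : ℝ) - (K a : ℝ) ≤ (m : ℝ) - 1 := by
        have : (K a : ℝ) ≥ 1 := by exact_mod_cast hka
        have : (K b : ℝ) ≤ m := by exact_mod_cast hkb
        have h1 : (1:ℝ) ≤ (K a : ℝ) := by exact_mod_cast hka
        linarith
      have hring : α * L * ((K b : ℝ) - (K a : ℝ) + 1) / m
          - α * L * (K b : ℝ) / m + α * L * (K a : ℝ) / m = α * L / m := by ring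
      linarith
    -- combine
    have h1 : (E.card : ℝ) ≤ ((ψ b - ψ a + 1 : ℤ) : ℝ) := by
      have := hIcc ▸ (Int.ofNat_le.2 hcardle)
      exact_mod_cast this
    push_cast at h1
    push_cast at hψba
    linarith

theorem stmt12 (m : ℕ) (hm : 1 ≤ m) (α : ℝ) (hα : α ∈ Icc (0 : ℝ) 1)
    (pfix : ℕ → ℝ) (hpfix : ∀ i, i < m - 1 → pfix i ∈ Icc (0 : ℝ) 1) :
    ∃ C : ℝ, ∃ L0 : ℕ, 1 ≤ L0 ∧ ∀ L : ℕ, L0 ≤ L →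
      (1 / (L : ℝ)) * ∑ ℓ ∈ Finset.Icc 1 L,
        (if 1 ≤ slR α (fun i : Fin m => if (i : ℕ) < m - 1 then pfix i else (ℓ : ℝ) / L)
            ∧ slTau α (fun i : Fin m => if (i : ℕ) < m - 1 then pfix i else (ℓ : ℝ) / L)
              = (ℓ : ℝ) / L
          then 1 / (({i : Fin m |
              (if (i : ℕ) < m - 1 then pfix i else (ℓ : ℝ) / L) = (ℓ : ℝ) / L}.ncard : ℝ))
          else 0)
      ≤ α / m + C * m / L := by
  classical
  refine ⟨2, 1, le_refl 1, fun L hL => ?_⟩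
  have hm0 : (0:ℝ) < m := by exact_mod_cast hm
  have hL0 : (0:ℝ) < L := by exact_mod_cast hL
  set P : ℕ → Prop := fun ℓ =>
    1 ≤ slR α (fun i : Fin m => if (i : ℕ) < m - 1 then pfix i else (ℓ : ℝ) / L)
    ∧ slTau α (fun i : Fin m => if (i : ℕ) < m - 1 then pfix i else (ℓ : ℝ) / L)
      = (ℓ : ℝ) / L with hP
  set E : Finset ℕ := (Finset.Icc 1 L).filter P with hE
  -- step 1 : the sum is at most E.card
  have hstep1 : ∑ ℓ ∈ Finset.Icc 1 L,
      (if P ℓ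
        then 1 / (({i : Fin m |
            (if (i : ℕ) < m - 1 then pfix i else (ℓ : ℝ) / L) = (ℓ : ℝ) / L}.ncard : ℝ))
        else 0)
      ≤ (E.card : ℝ) := by
    have h1 : ∀ ℓ ∈ Finset.Icc 1 L,
        (if P ℓ
          then 1 / (({i : Fin m |
              (if (i : ℕ) < m - 1 then pfix i else (ℓ : ℝ) / L) = (ℓ : ℝ) / L}.ncard : ℝ))
          else 0) ≤ (if P ℓ then (1:ℝ) else 0) := by
      intro ℓ _
      by_cases hc : P ℓ
      · rw [if_pos hc, if_pos hc]
        set s := {i : Fin m | (if (i : ℕ) < m - 1 then pfix i else (ℓ : ℝ) / L) = (ℓ : ℝ) / L}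
          with hs
        have hmem : (⟨m-1, by omega⟩ : Fin m) ∈ s := by
          simp only [hs, Set.mem_setOf_eq]
          rw [if_neg]
          exact lt_irrefl _
        have hpos : 0 < s.ncard := (Set.ncard_pos (Set.toFinite s)).2 ⟨_, hmem⟩
        have h1n : (1:ℝ) ≤ (s.ncard : ℝ) := by exact_mod_cast hpos
        rw [div_le_one (by linarith)]
        exact h1n
      · rw [if_neg hc, if_neg hc]
    calc ∑ ℓ ∈ Finset.Icc 1 L, _ ≤ ∑ ℓ ∈ Finset.Icc 1 L, (if P ℓ then (1:ℝ) else 0) :=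
          Finset.sum_le_sum h1
      _ = (E.card : ℝ) := by rw [Finset.sum_boole, hE]
  have hstep2 : (E.card : ℝ) ≤ α * L / m + 2 * m := by
    apply card_bound m hm α hα pfix L hL E (Finset.filter_subset _ _)
    intro ℓ hℓ
    exact (Finset.mem_filter.1 hℓ).2
  have hfinal : (1 / (L:ℝ)) * ∑ ℓ ∈ Finset.Icc 1 L,
      (if P ℓ
        then 1 / (({i : Fin m |
            (if (i : ℕ) < m - 1 then pfix i else (ℓ : ℝ) / L) = (ℓ : ℝ) / L}.ncard : ℝ))
        else 0)
      ≤ α / m + 2 * m / L := by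
    have h2 : (1/(L:ℝ)) * (α * L / m + 2 * m) = α / m + 2 * m / L := by
      have hL' : (L:ℝ) ≠ 0 := ne_of_gt hL0
      have hm' : (m:ℝ) ≠ 0 := ne_of_gt hm0
      field_simp
    calc (1 / (L:ℝ)) * ∑ ℓ ∈ Finset.Icc 1 L, _
        ≤ (1/(L:ℝ)) * (α * L / m + 2 * m) := by
          apply mul_le_mul_of_nonneg_left _ (by positivity)
          exact le_trans hstep1 hstep2
      _ = α / m + 2 * m / L := h2
  exact hfinal
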